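/- There exists a polynomial q such that every SLTL-satisfiable LTL∨PSL formula φ is satisfied in an SLTL model M = (Π, λ) whose set Π of traces has cardinality at most q(|φ|), where |φ| denotes the size of φ. -/

import Mathlib

/-! ### SLTL: syntax, models, satisfaction -/

inductive SForm : Type where
  | var : ℕ → SForm
  | le : ℕ → ℕ → SForm
  | tru : SForm
  | fls : SForm
  | neg : SForm → SForm
  | conj : SForm → SForm → SForm
  | dia : ℕ → SForm → SForm
  | box : ℕ → SForm → SForm
  | next : SForm → SForm
  | until_ : SForm → SForm → SForm

/-- Traces: ω-sequences of propositional valuations. -/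
abbrev Trace := ℕ → Set ℕ

/-- An SLTL model `(Π, λ)`; standpoint symbols are natural numbers, `0` is the
universal standpoint `*`. -/
structure SLTLModel where
  Pi : Set Trace
  lam : ℕ → Set Trace
  pi_nonempty : Pi.Nonempty
  lam_sub : ∀ s, lam s ⊆ Pi
  lam_nonempty : ∀ s, (lam s).Nonempty
  lam_star : lam 0 = Pi

def SSat (M : SLTLModel) : SForm → Trace → ℕ → Prop
  | .var p, σ, i => p ∈ σ i
  | .le s s', _, _ => M.lam s ⊆ M.lam s'
  | .tru, _, _ => True
  | .fls, _, _ => False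
  | .neg a, σ, i => ¬ SSat M a σ i
  | .conj a b, σ, i => SSat M a σ i ∧ SSat M b σ i
  | .dia s a, _, i => ∃ σ' ∈ M.lam s, SSat M a σ' i
  | .box s a, _, i => ∀ σ' ∈ M.lam s, SSat M a σ' i
  | .next a, σ, i => SSat M a σ (i + 1)
  | .until_ a b, σ, i =>
      ∃ i', i ≤ i' ∧ SSat M b σ i' ∧ ∀ i'', i ≤ i'' → i'' < i' → SSat M a σ i''

def SLTLSatisfiable (φ : SForm) : Prop :=
  ∃ M : SLTLModel, ∃ σ ∈ M.Pi, SSat M φ σ 0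

def SForm.impl (a b : SForm) : SForm := .neg (.conj a (.neg b))
def SForm.iffc (a b : SForm) : SForm := .conj (a.impl b) (b.impl a)
/-- `G φ := ¬(⊤ U ¬φ)`. -/
def SForm.G (a : SForm) : SForm := .neg (.until_ .tru (.neg a))
def bigAnd (l : List SForm) : SForm := l.foldr .conj .tru
/-- The list `[a, a+1, …, b]`. -/
def listIcc (a b : ℕ) : List ℕ := (List.range (b + 1 - a)).map (fun k => a + k)

/-- Propositional variables occurring in a formula. -/
def varsSF : SForm → Finset ℕ
  | .var p => {p}
  | .le _ _ => ∅
  | .tru => ∅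
  | .fls => ∅
  | .neg a => varsSF a
  | .conj a b => varsSF a ∪ varsSF b
  | .dia _ a => varsSF a
  | .box _ a => varsSF a
  | .next a => varsSF a
  | .until_ a b => varsSF a ∪ varsSF b

/-- Standpoint symbols occurring in a formula. -/
def standsSF : SForm → Finset ℕ
  | .var _ => ∅
  | .le s s' => {s, s'}
  | .tru => ∅
  | .fls => ∅
  | .neg a => standsSF a
  | .conj a b => standsSF a ∪ standsSF b
  | .dia s a => insert s (standsSF a)
  | .box s a => insert s (standsSF a)
  | .next a => standsSF a
  | .until_ a b => standsSF a ∪ standsSF b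

/-- No temporal connective (`X` or `U`) occurs in the formula. -/
def noTemp : SForm → Prop
  | .neg a => noTemp a
  | .conj a b => noTemp a ∧ noTemp b
  | .dia _ a => noTemp a
  | .box _ a => noTemp a
  | .next _ => False
  | .until_ _ _ => False
  | _ => True

/-- The fragment LTL∨PSL: no temporal connective occurs within the scope of a
standpoint modality. -/
def isLTLPSL : SForm → Prop
  | .neg a => isLTLPSL a
  | .conj a b => isLTLPSL a ∧ isLTLPSL b
  | .dia _ a => noTemp a
  | .box _ a => noTemp a
  | .next a => isLTLPSL a
  | .until_ a b => isLTLPSL a ∧ isLTLPSL b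
  | _ => True

def sizeSF : SForm → ℕ
  | .var _ => 1
  | .le _ _ => 1
  | .tru => 1
  | .fls => 1
  | .neg a => sizeSF a + 1
  | .conj a b => sizeSF a + sizeSF b + 1
  | .dia _ a => sizeSF a + 1
  | .box _ a => sizeSF a + 1
  | .next a => sizeSF a + 1
  | .until_ a b => sizeSF a + sizeSF b + 1


/-! ### Auxiliary development for the small-model property -/

deriving instance DecidableEq for SForm

open scoped Classical

/-- Subformulas. -/
def subf : SForm → Finset SForm
  | .var p => {.var p}
  | .le s s' => {.le s s'}
  | .tru => {.tru}
  | .fls => {.fls}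
  | .neg a => insert (.neg a) (subf a)
  | .conj a b => insert (.conj a b) (subf a ∪ subf b)
  | .dia s a => insert (.dia s a) (subf a)
  | .box s a => insert (.box s a) (subf a)
  | .next a => insert (.next a) (subf a)
  | .until_ a b => insert (.until_ a b) (subf a ∪ subf b)

lemma self_mem_subf (a : SForm) : a ∈ subf a := by
  cases a <;> simp [subf]

lemma subf_trans : ∀ a b : SForm, b ∈ subf a → subf b ⊆ subf a := by
  intro a
  induction a with
  | var p => intro b hb; simp [subf] at hb; subst hb; exact subset_rfl
  | le s s' => intro b hb; simp [subf] at hb; subst hb; exact subset_rfl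
  | tru => intro b hb; simp [subf] at hb; subst hb; exact subset_rfl
  | fls => intro b hb; simp [subf] at hb; subst hb; exact subset_rfl
  | neg a ih =>
      intro b hb
      simp only [subf] at hb ⊢
      rcases Finset.mem_insert.mp hb with rfl | hb
      · exact subset_rfl
      · exact (ih b hb).trans (Finset.subset_insert _ _)
  | conj a b iha ihb =>
      intro c hc
      simp only [subf] at hc ⊢
      rcases Finset.mem_insert.mp hc with rfl | hc
      · exact subset_rfl
      · rcases Finset.mem_union.mp hc with hc | hc
        · exact (iha c hc).trans (Finset.subset_union_left.trans (Finset.subset_insert _ _))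
        · exact (ihb c hc).trans (Finset.subset_union_right.trans (Finset.subset_insert _ _))
  | dia s a ih =>
      intro b hb
      simp only [subf] at hb ⊢
      rcases Finset.mem_insert.mp hb with rfl | hb
      · exact subset_rfl
      · exact (ih b hb).trans (Finset.subset_insert _ _)
  | box s a ih =>
      intro b hb
      simp only [subf] at hb ⊢
      rcases Finset.mem_insert.mp hb with rfl | hb
      · exact subset_rfl
      · exact (ih b hb).trans (Finset.subset_insert _ _)
  | next a ih =>
      intro b hb
      simp only [subf] at hb ⊢
      rcases Finset.mem_insert.mp hb with rfl | hb
      · exact subset_rfl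
      · exact (ih b hb).trans (Finset.subset_insert _ _)
  | until_ a b iha ihb =>
      intro c hc
      simp only [subf] at hc ⊢
      rcases Finset.mem_insert.mp hc with rfl | hc
      · exact subset_rfl
      · rcases Finset.mem_union.mp hc with hc | hc
        · exact (iha c hc).trans (Finset.subset_union_left.trans (Finset.subset_insert _ _))
        · exact (ihb c hc).trans (Finset.subset_union_right.trans (Finset.subset_insert _ _))

lemma stands_subf : ∀ a b : SForm, b ∈ subf a → standsSF b ⊆ standsSF a := by
  intro a
  induction a with
  | var p => intro b hb; simp [subf] at hb; subst hb; exact subset_rfl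
  | le s s' => intro b hb; simp [subf] at hb; subst hb; exact subset_rfl
  | tru => intro b hb; simp [subf] at hb; subst hb; exact subset_rfl
  | fls => intro b hb; simp [subf] at hb; subst hb; exact subset_rfl
  | neg a ih =>
      intro b hb
      simp only [subf] at hb
      rcases Finset.mem_insert.mp hb with rfl | hb
      · exact subset_rfl
      · exact ih b hb
  | conj a b iha ihb =>
      intro c hc
      simp only [subf] at hc
      rcases Finset.mem_insert.mp hc with rfl | hc
      · exact subset_rfl
      · rcases Finset.mem_union.mp hc with hc | hc
        · exact (iha c hc).trans Finset.subset_union_left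
        · exact (ihb c hc).trans Finset.subset_union_right
  | dia s a ih =>
      intro b hb
      simp only [subf] at hb
      rcases Finset.mem_insert.mp hb with rfl | hb
      · exact subset_rfl
      · exact (ih b hb).trans (Finset.subset_insert _ _)
  | box s a ih =>
      intro b hb
      simp only [subf] at hb
      rcases Finset.mem_insert.mp hb with rfl | hb
      · exact subset_rfl
      · exact (ih b hb).trans (Finset.subset_insert _ _)
  | next a ih =>
      intro b hb
      simp only [subf] at hb
      rcases Finset.mem_insert.mp hb with rfl | hb
      · exact subset_rfl
      · exact ih b hb
  | until_ a b iha ihb =>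
      intro c hc
      simp only [subf] at hc
      rcases Finset.mem_insert.mp hc with rfl | hc
      · exact subset_rfl
      · rcases Finset.mem_union.mp hc with hc | hc
        · exact (iha c hc).trans Finset.subset_union_left
        · exact (ihb c hc).trans Finset.subset_union_right

lemma vars_subf : ∀ a b : SForm, b ∈ subf a → varsSF b ⊆ varsSF a := by
  intro a
  induction a with
  | var p => intro b hb; simp [subf] at hb; subst hb; exact subset_rfl
  | le s s' => intro b hb; simp [subf] at hb; subst hb; exact subset_rfl
  | tru => intro b hb; simp [subf] at hb; subst hb; exact subset_rfl
  | fls => intro b hb; simp [subf] at hb; subst hb; exact subset_rfl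
  | neg a ih =>
      intro b hb
      simp only [subf] at hb
      rcases Finset.mem_insert.mp hb with rfl | hb
      · exact subset_rfl
      · exact ih b hb
  | conj a b iha ihb =>
      intro c hc
      simp only [subf] at hc
      rcases Finset.mem_insert.mp hc with rfl | hc
      · exact subset_rfl
      · rcases Finset.mem_union.mp hc with hc | hc
        · exact (iha c hc).trans Finset.subset_union_left
        · exact (ihb c hc).trans Finset.subset_union_right
  | dia s a ih =>
      intro b hb
      simp only [subf] at hb
      rcases Finset.mem_insert.mp hb with rfl | hb
      · exact subset_rfl
      · exact ih b hb
  | box s a ih =>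
      intro b hb
      simp only [subf] at hb
      rcases Finset.mem_insert.mp hb with rfl | hb
      · exact subset_rfl
      · exact ih b hb
  | next a ih =>
      intro b hb
      simp only [subf] at hb
      rcases Finset.mem_insert.mp hb with rfl | hb
      · exact subset_rfl
      · exact ih b hb
  | until_ a b iha ihb =>
      intro c hc
      simp only [subf] at hc
      rcases Finset.mem_insert.mp hc with rfl | hc
      · exact subset_rfl
      · rcases Finset.mem_union.mp hc with hc | hc
        · exact (iha c hc).trans Finset.subset_union_left
        · exact (ihb c hc).trans Finset.subset_union_right

lemma card_subf : ∀ a : SForm, (subf a).card ≤ sizeSF a := by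
  intro a
  induction a with
  | var p => simp [subf, sizeSF]
  | le s s' => simp [subf, sizeSF]
  | tru => simp [subf, sizeSF]
  | fls => simp [subf, sizeSF]
  | neg a ih =>
      simp only [subf, sizeSF]
      calc (insert (SForm.neg a) (subf a)).card ≤ (subf a).card + 1 := Finset.card_insert_le _ _
        _ ≤ sizeSF a + 1 := by omega
  | conj a b iha ihb =>
      simp only [subf, sizeSF]
      calc (insert (SForm.conj a b) (subf a ∪ subf b)).card
          ≤ (subf a ∪ subf b).card + 1 := Finset.card_insert_le _ _
        _ ≤ (subf a).card + (subf b).card + 1 := by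
              have := Finset.card_union_le (subf a) (subf b); omega
        _ ≤ sizeSF a + sizeSF b + 1 := by omega
  | dia s a ih =>
      simp only [subf, sizeSF]
      calc (insert (SForm.dia s a) (subf a)).card ≤ (subf a).card + 1 := Finset.card_insert_le _ _
        _ ≤ sizeSF a + 1 := by omega
  | box s a ih =>
      simp only [subf, sizeSF]
      calc (insert (SForm.box s a) (subf a)).card ≤ (subf a).card + 1 := Finset.card_insert_le _ _
        _ ≤ sizeSF a + 1 := by omega
  | next a ih =>
      simp only [subf, sizeSF]
      calc (insert (SForm.next a) (subf a)).card ≤ (subf a).card + 1 := Finset.card_insert_le _ _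
        _ ≤ sizeSF a + 1 := by omega
  | until_ a b iha ihb =>
      simp only [subf, sizeSF]
      calc (insert (SForm.until_ a b) (subf a ∪ subf b)).card
          ≤ (subf a ∪ subf b).card + 1 := Finset.card_insert_le _ _
        _ ≤ (subf a).card + (subf b).card + 1 := by
              have := Finset.card_union_le (subf a) (subf b); omega
        _ ≤ sizeSF a + sizeSF b + 1 := by omega

lemma card_stands : ∀ a : SForm, (standsSF a).card ≤ 2 * sizeSF a := by
  intro a
  induction a with
  | var p => simp [standsSF, sizeSF]
  | le s s' =>
      simp only [standsSF, sizeSF]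
      calc (insert s {s'} : Finset ℕ).card ≤ ({s'} : Finset ℕ).card + 1 := Finset.card_insert_le _ _
        _ ≤ 2 * 1 := by simp
  | tru => simp [standsSF, sizeSF]
  | fls => simp [standsSF, sizeSF]
  | neg a ih => simp only [standsSF, sizeSF]; omega
  | conj a b iha ihb =>
      simp only [standsSF, sizeSF]
      have := Finset.card_union_le (standsSF a) (standsSF b); omega
  | dia s a ih =>
      simp only [standsSF, sizeSF]
      have := Finset.card_insert_le s (standsSF a); omega
  | box s a ih =>
      simp only [standsSF, sizeSF]
      have := Finset.card_insert_le s (standsSF a); omega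
  | next a ih => simp only [standsSF, sizeSF]; omega
  | until_ a b iha ihb =>
      simp only [standsSF, sizeSF]
      have := Finset.card_union_le (standsSF a) (standsSF b); omega

/-- Whether a formula is a standpoint modality. -/
def isModal : SForm → Bool
  | .dia _ _ => true
  | .box _ _ => true
  | _ => false

/-- Index type for the traces of the small model. -/
abbrev SIdx : Type := Unit ⊕ (ℕ ⊕ ((ℕ × ℕ) ⊕ SForm))

/-- Diagonal witness/counterexample sources for modal formulas. -/
noncomputable def diagT (M : SLTLModel) (σ₀ : Trace) : SForm → ℕ → Trace
  | .dia s a => fun i =>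
      if h : ∃ w ∈ M.lam s, SSat M a w i then h.choose else (M.lam_nonempty s).choose
  | .box s a => fun i =>
      if h : ∃ w ∈ M.lam s, ¬ SSat M a w i then h.choose else (M.lam_nonempty s).choose
  | _ => fun _ => σ₀

/-- A trace separating `lam s` from `lam s'` when possible. -/
noncomputable def pairT (M : SLTLModel) (σ₀ : Trace) (s s' : ℕ) : Trace :=
  if h : ∃ u ∈ M.lam s, u ∉ M.lam s' then h.choose else σ₀

/-- Source traces for each index. -/
noncomputable def specT (M : SLTLModel) (σ₀ : Trace) : SIdx → ℕ → Trace
  | .inl _ => fun _ => σ₀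
  | .inr (.inl s) => fun _ => (M.lam_nonempty s).choose
  | .inr (.inr (.inl p)) => fun _ => pairT M σ₀ p.1 p.2
  | .inr (.inr (.inr ψ)) => diagT M σ₀ ψ

def standSet (φ : SForm) : Finset ℕ := insert 0 (standsSF φ)

noncomputable def modalSet (φ : SForm) : Finset SForm := (subf φ).filter (fun ψ => isModal ψ)

noncomputable def idxSet (φ : SForm) : Finset SIdx :=
  (({Sum.inl ()} ∪ (standSet φ).image (fun s => Sum.inr (Sum.inl s)))
    ∪ ((standSet φ ×ˢ standSet φ).image (fun p => Sum.inr (Sum.inr (Sum.inl p)))))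
    ∪ ((modalSet φ).image (fun ψ => Sum.inr (Sum.inr (Sum.inr ψ))))

noncomputable def tagOf (φ : SForm) (x : SIdx) : ℕ :=
  @List.idxOf SIdx instBEqOfDecidableEq x (idxSet φ).toList

def v0 (φ : SForm) : ℕ := (varsSF φ).sup id + 1

lemma lt_v0 {φ : SForm} {p : ℕ} (hp : p ∈ varsSF φ) : p < v0 φ :=
  Nat.lt_succ_of_le (Finset.le_sup (f := id) hp)

/-- The traces of the small model. -/
noncomputable def mkT (φ : SForm) (M : SLTLModel) (σ₀ : Trace) (x : SIdx) : Trace :=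
  fun i => (specT M σ₀ x i i ∩ ↑(varsSF φ))
    ∪ (if i = 0 then {v0 φ + tagOf φ x} else (∅ : Set ℕ))

lemma k_base (φ : SForm) : (Sum.inl () : SIdx) ∈ idxSet φ := by
  simp [idxSet]

lemma k_stand (φ : SForm) {s : ℕ} (hs : s ∈ standSet φ) :
    (Sum.inr (Sum.inl s) : SIdx) ∈ idxSet φ := by
  simp only [idxSet, Finset.mem_union, Finset.mem_image]
  exact Or.inl (Or.inl (Or.inr ⟨s, hs, rfl⟩))

lemma k_pair (φ : SForm) {s s' : ℕ} (hs : s ∈ standSet φ) (hs' : s' ∈ standSet φ) :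
    (Sum.inr (Sum.inr (Sum.inl (s, s'))) : SIdx) ∈ idxSet φ := by
  simp only [idxSet, Finset.mem_union, Finset.mem_image]
  exact Or.inl (Or.inr ⟨(s, s'), Finset.mem_product.mpr ⟨hs, hs'⟩, rfl⟩)

lemma k_form (φ : SForm) {ψ : SForm} (hψ : ψ ∈ modalSet φ) :
    (Sum.inr (Sum.inr (Sum.inr ψ)) : SIdx) ∈ idxSet φ := by
  simp only [idxSet, Finset.mem_union, Finset.mem_image]
  exact Or.inr ⟨ψ, hψ, rfl⟩

lemma tagOf_inj {φ : SForm} {x y : SIdx} (hx : x ∈ idxSet φ) (hy : y ∈ idxSet φ)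
    (h : tagOf φ x = tagOf φ y) : x = y := by
  have hx' : x ∈ (idxSet φ).toList := Finset.mem_toList.mpr hx
  have hy' : y ∈ (idxSet φ).toList := Finset.mem_toList.mpr hy
  simp only [tagOf] at h
  exact (@List.idxOf_inj SIdx instBEqOfDecidableEq _ _ x y hx').mp h

lemma mkT_inj {φ : SForm} {M : SLTLModel} {σ₀ : Trace} {x y : SIdx}
    (hx : x ∈ idxSet φ) (hy : y ∈ idxSet φ) (h : mkT φ M σ₀ x = mkT φ M σ₀ y) : x = y := by
  have h0 : mkT φ M σ₀ x 0 = mkT φ M σ₀ y 0 := congrFun h 0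
  have hm : v0 φ + tagOf φ x ∈ mkT φ M σ₀ x 0 := by
    simp [mkT]
  rw [h0] at hm
  simp only [mkT, Set.mem_union, Set.mem_inter_iff, Finset.mem_coe, reduceIte,
    Set.mem_singleton_iff] at hm
  rcases hm with ⟨_, hm⟩ | hm
  · have : v0 φ + tagOf φ x < v0 φ := lt_v0 hm
    omega
  · exact tagOf_inj hx hy (by omega)

lemma specT_mem_Pi {M : SLTLModel} {σ₀ : Trace} (hσ : σ₀ ∈ M.Pi) :
    ∀ (x : SIdx) (i : ℕ), specT M σ₀ x i ∈ M.Pi := by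
  intro x i
  rcases x with _ | s | ⟨s, s'⟩ | ψ
  · exact hσ
  · exact M.lam_sub s (M.lam_nonempty s).choose_spec
  · show pairT M σ₀ s s' ∈ M.Pi
    rw [pairT]
    split
    · next h => exact M.lam_sub s h.choose_spec.1
    · exact hσ
  · cases ψ with
    | dia s a =>
        show (if h : ∃ w ∈ M.lam s, SSat M a w i then h.choose
              else (M.lam_nonempty s).choose) ∈ M.Pi
        split
        · next h => exact M.lam_sub s h.choose_spec.1
        · exact M.lam_sub s (M.lam_nonempty s).choose_spec
    | box s a =>
        show (if h : ∃ w ∈ M.lam s, ¬ SSat M a w i then h.choose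
              else (M.lam_nonempty s).choose) ∈ M.Pi
        split
        · next h => exact M.lam_sub s h.choose_spec.1
        · exact M.lam_sub s (M.lam_nonempty s).choose_spec
    | var p => exact hσ
    | le s s' => exact hσ
    | tru => exact hσ
    | fls => exact hσ
    | neg a => exact hσ
    | conj a b => exact hσ
    | next a => exact hσ
    | until_ a b => exact hσ

/-- The small model. -/
noncomputable def SmallM (φ : SForm) (M : SLTLModel) (σ₀ : Trace) (hσ : σ₀ ∈ M.Pi) :
    SLTLModel where
  Pi := mkT φ M σ₀ '' ↑(idxSet φ)
  lam s := if s ∈ standSet φ then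
      {t | ∃ x ∈ idxSet φ, t = mkT φ M σ₀ x ∧ ∀ i, specT M σ₀ x i ∈ M.lam s}
    else mkT φ M σ₀ '' ↑(idxSet φ)
  pi_nonempty := ⟨mkT φ M σ₀ (Sum.inl ()), ⟨Sum.inl (), k_base φ, rfl⟩⟩
  lam_sub := by
    intro s
    split
    · rintro t ⟨x, hx, rfl, _⟩
      exact ⟨x, hx, rfl⟩
    · exact subset_rfl
  lam_nonempty := by
    intro s
    split
    · next hs =>
        refine ⟨mkT φ M σ₀ (Sum.inr (Sum.inl s)), Sum.inr (Sum.inl s), k_stand φ hs, rfl, ?_⟩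
        intro i
        exact (M.lam_nonempty s).choose_spec
    · exact ⟨mkT φ M σ₀ (Sum.inl ()), ⟨Sum.inl (), k_base φ, rfl⟩⟩
  lam_star := by
    have h0 : (0 : ℕ) ∈ standSet φ := Finset.mem_insert_self 0 _
    rw [if_pos h0]
    ext t
    constructor
    · rintro ⟨x, hx, rfl, _⟩
      exact ⟨x, hx, rfl⟩
    · rintro ⟨x, hx, rfl⟩
      refine ⟨x, hx, rfl, fun i => ?_⟩
      rw [M.lam_star]
      exact specT_mem_Pi hσ x i

lemma SmallM_lam_pos (φ : SForm) (M : SLTLModel) (σ₀ : Trace) (hσ : σ₀ ∈ M.Pi)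
    {s : ℕ} (hs : s ∈ standSet φ) :
    (SmallM φ M σ₀ hσ).lam s
      = {t | ∃ x ∈ idxSet φ, t = mkT φ M σ₀ x ∧ ∀ i, specT M σ₀ x i ∈ M.lam s} := by
  show (if s ∈ standSet φ then _ else _) = _
  rw [if_pos hs]

lemma stands_in_SSet {φ a : SForm} (ha : a ∈ subf φ) {s : ℕ} (hs : s ∈ standsSF a) :
    s ∈ standSet φ :=
  Finset.mem_insert_of_mem (stands_subf φ a ha hs)

/-- Key lemma A: rigid (temporal-free) subformulas are preserved between the
original model and the small model. -/
lemma lemA (φ : SForm) (M : SLTLModel) (σ₀ : Trace) (hσ : σ₀ ∈ M.Pi) :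
    ∀ a : SForm, noTemp a → a ∈ subf φ → ∀ x ∈ idxSet φ, ∀ i : ℕ,
      (SSat (SmallM φ M σ₀ hσ) a (mkT φ M σ₀ x) i ↔ SSat M a (specT M σ₀ x i) i) := by
  intro a
  induction a with
  | var p =>
      intro _ hmem x hx i
      have hp : p ∈ varsSF φ := vars_subf φ _ hmem (by simp [varsSF])
      show p ∈ mkT φ M σ₀ x i ↔ p ∈ specT M σ₀ x i i
      simp only [mkT, Set.mem_union, Set.mem_inter_iff, Finset.mem_coe]
      constructor
      · rintro (⟨h1, _⟩ | h2)
        · exact h1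
        · exfalso
          have hpe : p = v0 φ + tagOf φ x := by
            by_cases h0 : i = 0
            · simpa [h0] using h2
            · simp [h0] at h2
          have := lt_v0 hp
          omega
      · intro h
        exact Or.inl ⟨h, hp⟩
  | le s s' =>
      intro _ hmem x hx i
      have hs : s ∈ standSet φ := stands_in_SSet hmem (by simp [standsSF])
      have hs' : s' ∈ standSet φ := stands_in_SSet hmem (by simp [standsSF])
      show (SmallM φ M σ₀ hσ).lam s ⊆ (SmallM φ M σ₀ hσ).lam s' ↔ M.lam s ⊆ M.lam s'
      rw [SmallM_lam_pos φ M σ₀ hσ hs, SmallM_lam_pos φ M σ₀ hσ hs']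
      constructor
      · intro h
        by_contra hns
        have hex : ∃ u ∈ M.lam s, u ∉ M.lam s' := by
          rcases Set.not_subset.mp hns with ⟨u, hu1, hu2⟩
          exact ⟨u, hu1, hu2⟩
        have hpair1 : pairT M σ₀ s s' ∈ M.lam s := by
          rw [pairT, dif_pos hex]; exact hex.choose_spec.1
        have hpair2 : pairT M σ₀ s s' ∉ M.lam s' := by
          rw [pairT, dif_pos hex]; exact hex.choose_spec.2
        set x1 : SIdx := Sum.inr (Sum.inr (Sum.inl (s, s'))) with hx1def
        have hx1 : x1 ∈ idxSet φ := k_pair φ hs hs'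
        have hmem1 : mkT φ M σ₀ x1
            ∈ {t | ∃ x ∈ idxSet φ, t = mkT φ M σ₀ x ∧ ∀ i, specT M σ₀ x i ∈ M.lam s} :=
          ⟨x1, hx1, rfl, fun _ => hpair1⟩
        obtain ⟨y, hy, heq, hall⟩ := h hmem1
        have : x1 = y := mkT_inj hx1 hy heq
        subst this
        exact hpair2 (hall 0)
      · intro h
        rintro t ⟨x', hx', rfl, hall⟩
        exact ⟨x', hx', rfl, fun i => h (hall i)⟩
  | tru => intro _ _ _ _ _; exact Iff.rfl
  | fls => intro _ _ _ _ _; exact Iff.rfl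
  | neg a ih =>
      intro ht hmem x hx i
      have ha : a ∈ subf φ := subf_trans φ _ hmem
        (by simp only [subf]; exact Finset.mem_insert_of_mem (self_mem_subf a))
      exact not_congr (ih ht ha x hx i)
  | conj a b iha ihb =>
      intro ht hmem x hx i
      have ha : a ∈ subf φ := subf_trans φ _ hmem
        (by simp only [subf]
            exact Finset.mem_insert_of_mem (Finset.mem_union_left _ (self_mem_subf a)))
      have hb : b ∈ subf φ := subf_trans φ _ hmem
        (by simp only [subf]
            exact Finset.mem_insert_of_mem (Finset.mem_union_right _ (self_mem_subf b)))
      exact and_congr (iha ht.1 ha x hx i) (ihb ht.2 hb x hx i)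
  | dia s a ih =>
      intro ht hmem x hx i
      have ha : a ∈ subf φ := subf_trans φ _ hmem
        (by simp only [subf]; exact Finset.mem_insert_of_mem (self_mem_subf a))
      have hs : s ∈ standSet φ := stands_in_SSet hmem (Finset.mem_insert_self _ _)
      have hd : (SForm.dia s a) ∈ modalSet φ := Finset.mem_filter.mpr ⟨hmem, rfl⟩
      show (∃ σ' ∈ (SmallM φ M σ₀ hσ).lam s, SSat (SmallM φ M σ₀ hσ) a σ' i)
        ↔ (∃ σ' ∈ M.lam s, SSat M a σ' i)
      rw [SmallM_lam_pos φ M σ₀ hσ hs]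
      constructor
      · rintro ⟨t, ⟨y, hy, rfl, hall⟩, hsat⟩
        exact ⟨specT M σ₀ y i, hall i, (ih ht ha y hy i).mp hsat⟩
      · intro h
        set xd : SIdx := Sum.inr (Sum.inr (Sum.inr (SForm.dia s a))) with hxddef
        have hxd : xd ∈ idxSet φ := k_form φ hd
        have hspec : specT M σ₀ xd = diagT M σ₀ (SForm.dia s a) := rfl
        have hd1 : ∀ j, diagT M σ₀ (SForm.dia s a) j ∈ M.lam s := by
          intro j
          show (if h : ∃ w ∈ M.lam s, SSat M a w j then h.choose
                else (M.lam_nonempty s).choose) ∈ M.lam s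
          split
          · next h' => exact h'.choose_spec.1
          · exact (M.lam_nonempty s).choose_spec
        have hd2 : SSat M a (diagT M σ₀ (SForm.dia s a) i) i := by
          show SSat M a (if h : ∃ w ∈ M.lam s, SSat M a w i then h.choose
                else (M.lam_nonempty s).choose) i
          rw [dif_pos h]
          exact h.choose_spec.2
        refine ⟨mkT φ M σ₀ xd, ⟨xd, hxd, rfl, fun j => by rw [hspec]; exact hd1 j⟩, ?_⟩
        exact (ih ht ha xd hxd i).mpr (by rw [hspec]; exact hd2)
  | box s a ih =>
      intro ht hmem x hx i
      have ha : a ∈ subf φ := subf_trans φ _ hmem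
        (by simp only [subf]; exact Finset.mem_insert_of_mem (self_mem_subf a))
      have hs : s ∈ standSet φ := stands_in_SSet hmem (Finset.mem_insert_self _ _)
      have hd : (SForm.box s a) ∈ modalSet φ := Finset.mem_filter.mpr ⟨hmem, rfl⟩
      show (∀ σ' ∈ (SmallM φ M σ₀ hσ).lam s, SSat (SmallM φ M σ₀ hσ) a σ' i)
        ↔ (∀ σ' ∈ M.lam s, SSat M a σ' i)
      rw [SmallM_lam_pos φ M σ₀ hσ hs]
      constructor
      · intro h
        by_contra hc
        push_neg at hc
        obtain ⟨w, hw, hnw⟩ := hc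
        have hex : ∃ w ∈ M.lam s, ¬ SSat M a w i := ⟨w, hw, hnw⟩
        set xb : SIdx := Sum.inr (Sum.inr (Sum.inr (SForm.box s a))) with hxbdef
        have hxb : xb ∈ idxSet φ := k_form φ hd
        have hspec : specT M σ₀ xb = diagT M σ₀ (SForm.box s a) := rfl
        have hd1 : ∀ j, diagT M σ₀ (SForm.box s a) j ∈ M.lam s := by
          intro j
          show (if h : ∃ w ∈ M.lam s, ¬ SSat M a w j then h.choose
                else (M.lam_nonempty s).choose) ∈ M.lam s
          split
          · next h' => exact h'.choose_spec.1
          · exact (M.lam_nonempty s).choose_spec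
        have hd2 : ¬ SSat M a (diagT M σ₀ (SForm.box s a) i) i := by
          show ¬ SSat M a (if h : ∃ w ∈ M.lam s, ¬ SSat M a w i then h.choose
                else (M.lam_nonempty s).choose) i
          rw [dif_pos hex]
          exact hex.choose_spec.2
        have hsat := h (mkT φ M σ₀ xb) ⟨xb, hxb, rfl, fun j => by rw [hspec]; exact hd1 j⟩
        exact hd2 (by rw [← hspec]; exact (ih ht ha xb hxb i).mp hsat)
      · intro h
        rintro t ⟨y, hy, rfl, hall⟩
        exact (ih ht ha y hy i).mpr (h _ (hall i))
  | next a ih => intro ht; exact ht.elim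
  | until_ a b iha ihb => intro ht; exact ht.elim

/-- Key lemma B: the formula is preserved along the base trace. -/
lemma lemB (φ : SForm) (M : SLTLModel) (σ₀ : Trace) (hσ : σ₀ ∈ M.Pi) :
    ∀ a : SForm, isLTLPSL a → a ∈ subf φ → ∀ i : ℕ,
      (SSat (SmallM φ M σ₀ hσ) a (mkT φ M σ₀ (Sum.inl ())) i ↔ SSat M a σ₀ i) := by
  intro a
  induction a with
  | var p =>
      intro hf hmem i
      exact lemA φ M σ₀ hσ (SForm.var p) trivial hmem _ (k_base φ) i
  | le s s' =>
      intro hf hmem i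
      exact lemA φ M σ₀ hσ (SForm.le s s') trivial hmem _ (k_base φ) i
  | tru => intro _ _ _; exact Iff.rfl
  | fls => intro _ _ _; exact Iff.rfl
  | neg a ih =>
      intro hf hmem i
      have ha : a ∈ subf φ := subf_trans φ _ hmem
        (by simp only [subf]; exact Finset.mem_insert_of_mem (self_mem_subf a))
      exact not_congr (ih hf ha i)
  | conj a b iha ihb =>
      intro hf hmem i
      have ha : a ∈ subf φ := subf_trans φ _ hmem
        (by simp only [subf]
            exact Finset.mem_insert_of_mem (Finset.mem_union_left _ (self_mem_subf a)))
      have hb : b ∈ subf φ := subf_trans φ _ hmem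
        (by simp only [subf]
            exact Finset.mem_insert_of_mem (Finset.mem_union_right _ (self_mem_subf b)))
      exact and_congr (iha hf.1 ha i) (ihb hf.2 hb i)
  | dia s a ih =>
      intro hf hmem i
      exact lemA φ M σ₀ hσ (SForm.dia s a) hf hmem _ (k_base φ) i
  | box s a ih =>
      intro hf hmem i
      exact lemA φ M σ₀ hσ (SForm.box s a) hf hmem _ (k_base φ) i
  | next a ih =>
      intro hf hmem i
      have ha : a ∈ subf φ := subf_trans φ _ hmem
        (by simp only [subf]; exact Finset.mem_insert_of_mem (self_mem_subf a))
      exact ih hf ha (i + 1)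
  | until_ a b iha ihb =>
      intro hf hmem i
      have ha : a ∈ subf φ := subf_trans φ _ hmem
        (by simp only [subf]
            exact Finset.mem_insert_of_mem (Finset.mem_union_left _ (self_mem_subf a)))
      have hb : b ∈ subf φ := subf_trans φ _ hmem
        (by simp only [subf]
            exact Finset.mem_insert_of_mem (Finset.mem_union_right _ (self_mem_subf b)))
      show (∃ i', i ≤ i' ∧ _ ∧ _) ↔ (∃ i', i ≤ i' ∧ _ ∧ _)
      constructor
      · rintro ⟨i', h1, h2, h3⟩
        exact ⟨i', h1, (ihb hf.2 hb i').mp h2,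
          fun j hj1 hj2 => (iha hf.1 ha j).mp (h3 j hj1 hj2)⟩
      · rintro ⟨i', h1, h2, h3⟩
        exact ⟨i', h1, (ihb hf.2 hb i').mpr h2,
          fun j hj1 hj2 => (iha hf.1 ha j).mpr (h3 j hj1 hj2)⟩

lemma KSet_card (φ : SForm) :
    (idxSet φ).card ≤ (2 * sizeSF φ + 2) ^ 2 + (2 * sizeSF φ + 2) + sizeSF φ + 1 := by
  have h1 : (standSet φ).card ≤ 2 * sizeSF φ + 2 := by
    have := Finset.card_insert_le (0 : ℕ) (standsSF φ)
    have := card_stands φ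
    simp only [standSet]
    omega
  have h2 : (modalSet φ).card ≤ sizeSF φ := by
    have hf : (modalSet φ).card ≤ (subf φ).card := Finset.card_filter_le _ _
    have := card_subf φ
    omega
  have hprod : (standSet φ ×ˢ standSet φ).card ≤ (2 * sizeSF φ + 2) ^ 2 := by
    rw [Finset.card_product]
    calc (standSet φ).card * (standSet φ).card ≤ (2 * sizeSF φ + 2) * (2 * sizeSF φ + 2) :=
          Nat.mul_le_mul h1 h1
      _ = (2 * sizeSF φ + 2) ^ 2 := by ring
  calc (idxSet φ).card
      ≤ (({Sum.inl ()} ∪ (standSet φ).image (fun s => (Sum.inr (Sum.inl s) : SIdx)))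
          ∪ ((standSet φ ×ˢ standSet φ).image (fun p => Sum.inr (Sum.inr (Sum.inl p))))).card
        + ((modalSet φ).image (fun ψ => (Sum.inr (Sum.inr (Sum.inr ψ)) : SIdx))).card :=
        Finset.card_union_le _ _
    _ ≤ (({Sum.inl ()} : Finset SIdx).card
          + ((standSet φ).image (fun s => (Sum.inr (Sum.inl s) : SIdx))).card)
        + ((standSet φ ×ˢ standSet φ).image (fun p => (Sum.inr (Sum.inr (Sum.inl p)) : SIdx))).card
        + ((modalSet φ).image (fun ψ => (Sum.inr (Sum.inr (Sum.inr ψ)) : SIdx))).card := by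
        have := Finset.card_union_le ({Sum.inl ()} : Finset SIdx)
          ((standSet φ).image (fun s => (Sum.inr (Sum.inl s) : SIdx)))
        have := Finset.card_union_le
          (({Sum.inl ()} : Finset SIdx) ∪ (standSet φ).image (fun s => (Sum.inr (Sum.inl s) : SIdx)))
          ((standSet φ ×ˢ standSet φ).image (fun p => (Sum.inr (Sum.inr (Sum.inl p)) : SIdx)))
        omega
    _ ≤ (1 + (2 * sizeSF φ + 2)) + (2 * sizeSF φ + 2) ^ 2 + sizeSF φ := by
        have i1 := Finset.card_image_le (s := standSet φ)
          (f := fun s => (Sum.inr (Sum.inl s) : SIdx))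
        have i2 := Finset.card_image_le (s := standSet φ ×ˢ standSet φ)
          (f := fun p => (Sum.inr (Sum.inr (Sum.inl p)) : SIdx))
        have i3 := Finset.card_image_le (s := modalSet φ)
          (f := fun ψ => (Sum.inr (Sum.inr (Sum.inr ψ)) : SIdx))
        simp only [Finset.card_singleton]
        omega
    _ ≤ (2 * sizeSF φ + 2) ^ 2 + (2 * sizeSF φ + 2) + sizeSF φ + 1 := by omega

lemma smallModel (φ : SForm) (h1 : isLTLPSL φ) (h2 : SLTLSatisfiable φ) :
    ∃ M : SLTLModel, (∃ σ ∈ M.Pi, SSat M φ σ 0) ∧ M.Pi.Finite ∧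
      M.Pi.ncard ≤ (sizeSF φ + 2) ^ 3 := by
  obtain ⟨M, σ₀, hσ, hsat⟩ := h2
  refine ⟨SmallM φ M σ₀ hσ, ⟨mkT φ M σ₀ (Sum.inl ()), ⟨Sum.inl (), k_base φ, rfl⟩, ?_⟩, ?_, ?_⟩
  · exact (lemB φ M σ₀ hσ φ h1 (self_mem_subf φ) 0).mpr hsat
  · exact Set.Finite.image _ (idxSet φ).finite_toSet
  · have hc1 : (SmallM φ M σ₀ hσ).Pi.ncard ≤ (idxSet φ).card := by
      calc (mkT φ M σ₀ '' ↑(idxSet φ)).ncard ≤ (↑(idxSet φ) : Set SIdx).ncard :=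
            Set.ncard_image_le (idxSet φ).finite_toSet
        _ = (idxSet φ).card := Set.ncard_coe_finset _
    have hc2 := KSet_card φ
    have hgoal : (2 * sizeSF φ + 2) ^ 2 + (2 * sizeSF φ + 2) + sizeSF φ + 1
        ≤ (sizeSF φ + 2) ^ 3 := by
      nlinarith [sq_nonneg (sizeSF φ), Nat.zero_le (sizeSF φ)]
    calc (SmallM φ M σ₀ hσ).Pi.ncard ≤ (idxSet φ).card := hc1
      _ ≤ _ := hc2
      _ ≤ (sizeSF φ + 2) ^ 3 := hgoal

/-- There is a polynomial `q` such that every SLTL-satisfiable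
LTL∨PSL formula `φ` is satisfied in an SLTL model whose set of traces has
cardinality at most `q(|φ|)`. -/
theorem stmt10 :
    ∃ q : Polynomial ℕ, ∀ φ : SForm, isLTLPSL φ → SLTLSatisfiable φ →
      ∃ M : SLTLModel, (∃ σ ∈ M.Pi, SSat M φ σ 0) ∧
        M.Pi.Finite ∧ M.Pi.ncard ≤ q.eval (sizeSF φ) := by
  refine ⟨(Polynomial.X + Polynomial.C 2) ^ 3, fun φ h1 h2 => ?_⟩
  have h := smallModel φ h1 h2
  simpa [Polynomial.eval_pow, Polynomial.eval_add] using h
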